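/- Let X be a finite set with at least two elements, let l : X → (0,∞), and set k(x,y) = l(y) for all x ≠ y. Write |l|₁ = ∑_{x∈X} l(x) and l_* = min_{x∈X} l(x). Let δ ≥ 1 and c > 0 be such that Υ(r) + Υ(−r) ≥ c·|r|^{1+δ} for all r ∈ ℝ. Then for every α ∈ (0, l_*/2), the Markov generator L satisfies CD_Υ( √(2|l|₁(l_* − 2α)), F ) with CD-function F(r) = (α·c/|l|₁^{δ})·r^{1+δ} for r ≥ 0. -/

import Mathlib

open Real Filter MeasureTheory Set

/-- `Υ(r) = e^r - r - 1`. -/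
noncomputable def Ups (r : ℝ) : ℝ := Real.exp r - r - 1

/-- `M₁(x) = ∑_{y ≠ x} k(x,y)`. -/
noncomputable def M1fn {X : Type*} (k : X → X → ℝ) (x : X) : ℝ :=
  ∑' y : {y : X // y ≠ x}, k x y

/-- The Markov generator `L f(x) = ∑_y k(x,y)(f(y) - f(x))`. -/
noncomputable def genOp {X : Type*} (k : X → X → ℝ) (f : X → ℝ) (x : X) : ℝ :=
  ∑' y, k x y * (f y - f x)

/-- `Ψ_Υ(f)(x) = ∑_y k(x,y) Υ(f(y) - f(x))`. -/
noncomputable def psiUps {X : Type*} (k : X → X → ℝ) (f : X → ℝ) (x : X) : ℝ :=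
  ∑' y, k x y * Ups (f y - f x)

/-- `B_{Υ'}(f,g)(x) = ∑_y k(x,y) Υ'(f(y)-f(x)) (g(y)-g(x))`. -/
noncomputable def bUps {X : Type*} (k : X → X → ℝ) (f g : X → ℝ) (x : X) : ℝ :=
  ∑' y, k x y * (Real.exp (f y - f x) - 1) * (g y - g x)

/-- `Ψ_{2,Υ}(f) = (1/2)(L Ψ_Υ(f) - B_{Υ'}(f, L f))`. -/
noncomputable def psi2Ups {X : Type*} (k : X → X → ℝ) (f : X → ℝ) (x : X) : ℝ :=
  (1/2) * (genOp k (psiUps k f) x - bUps k f (genOp k f) x)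

/-- Boundedness of a real-valued function on the state space. -/
def BddFun {X : Type*} (f : X → ℝ) : Prop := ∃ B : ℝ, ∀ x, |f x| ≤ B

/-- The standing assumptions on the transition rates: nonnegative off-diagonal rates,
`M₁(x) < ∞` (summability), `k(x,x) = -M₁(x)`, and `M₂(x) < ∞`. -/
def KernelSetting {X : Type*} (k : X → X → ℝ) : Prop :=
  (∀ x y, x ≠ y → 0 ≤ k x y) ∧
  (∀ x : X, Summable fun y : {y : X // y ≠ x} => k x y) ∧
  (∀ x : X, k x x = -M1fn k x) ∧
  (∀ x : X, Summable fun y : {y : X // y ≠ x} => k x y * M1fn k y)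

/-- A CD-function: continuous and nonnegative on `[0,∞)` with `F(0) = 0`, `F(r)/r`
strictly increasing on `(0,∞)` and `1/F` integrable at `∞`. -/
def IsCDFunction (F : ℝ → ℝ) : Prop :=
  ContinuousOn F (Ici 0) ∧ F 0 = 0 ∧ (∀ r : ℝ, 0 ≤ r → 0 ≤ F r) ∧
  StrictMonoOn (fun r => F r / r) (Ioi 0) ∧
  ∃ c : ℝ, 0 < c ∧ IntegrableOn (fun r => 1 / F r) (Ioi c)

/-- The trivial extension `F₀` of `F : [0,∞) → [0,∞)` by `0` on `(-∞,0)`. -/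
noncomputable def trivExt (F : ℝ → ℝ) : ℝ → ℝ := fun r => if 0 ≤ r then F r else 0

/-- The condition `CD_Υ(κ,F)` at a point `x`. -/
def CDUpsAt {X : Type*} (k : X → X → ℝ) (κ : ℝ) (F : ℝ → ℝ) (x : X) : Prop :=
  ∀ f : X → ℝ, BddFun f →
    κ * psiUps k f x + trivExt F (-genOp k f x) ≤ psi2Ups k f x

/-- The condition `CD_Υ(κ,F)` (at every point). -/
def CDUps {X : Type*} (k : X → X → ℝ) (κ : ℝ) (F : ℝ → ℝ) : Prop :=
  ∀ x : X, CDUpsAt k κ F x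

lemma Ups_nonneg' (r : ℝ) : 0 ≤ Real.exp r - r - 1 := by
  have := Real.add_one_le_exp r; linarith

/-- helper: nonneg on `[0,∞)` from value at 0 and nonneg derivative. -/
lemma nonneg_of_deriv' (F F' : ℝ → ℝ) (hd : ∀ t, HasDerivAt F (F' t) t)
    (h0 : 0 ≤ F 0) (h' : ∀ t, 0 ≤ t → 0 ≤ F' t) : ∀ t, 0 ≤ t → 0 ≤ F t := by
  have hmono : MonotoneOn F (Set.Ici 0) := by
    apply monotoneOn_of_deriv_nonneg (convex_Ici 0)
    · exact fun x _ => (hd x).continuousAt.continuousWithinAt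
    · intro x _; exact (hd x).differentiableAt.differentiableWithinAt
    · intro x hx
      rw [(hd x).deriv]
      exact h' x (le_of_lt (by simpa using hx))
  intro t ht
  calc (0:ℝ) ≤ F 0 := h0
    _ ≤ F t := hmono (Set.self_mem_Ici) ht ht

/-- `n`-th derivative of `G`. -/
noncomputable def gd (n : ℕ) (t : ℝ) : ℝ :=
  ((3:ℝ)^n * t + (3:ℝ)^n/3*((n:ℝ)-9)) * Real.exp (3*t)
  + ((2:ℝ)^n*2*t + (2:ℝ)^n*((n:ℝ)+7)) * Real.exp (2*t)
  - (2*t^2 + (4*(n:ℝ)+3)*t + (2*(n:ℝ)^2+(n:ℝ)+5)) * Real.exp t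

lemma gd_deriv (n : ℕ) (t : ℝ) : HasDerivAt (gd n) (gd (n+1) t) t := by
  have h3 : HasDerivAt (fun t : ℝ => Real.exp (3*t)) (3 * Real.exp (3*t)) t := by
    simpa [mul_comm] using (((hasDerivAt_id t).const_mul (3:ℝ)).exp)
  have h2 : HasDerivAt (fun t : ℝ => Real.exp (2*t)) (2 * Real.exp (2*t)) t := by
    simpa [mul_comm] using (((hasDerivAt_id t).const_mul (2:ℝ)).exp)
  have h1 : HasDerivAt (fun t : ℝ => Real.exp t) (Real.exp t) t := Real.hasDerivAt_exp t
  have p3 : HasDerivAt (fun t : ℝ => (3:ℝ)^n * t + (3:ℝ)^n/3*((n:ℝ)-9)) ((3:ℝ)^n) t := by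
    simpa using ((hasDerivAt_id t).const_mul ((3:ℝ)^n)).add_const ((3:ℝ)^n/3*((n:ℝ)-9))
  have p2 : HasDerivAt (fun t : ℝ => (2:ℝ)^n*2*t + (2:ℝ)^n*((n:ℝ)+7)) ((2:ℝ)^n*2) t := by
    simpa using ((hasDerivAt_id t).const_mul ((2:ℝ)^n*2)).add_const ((2:ℝ)^n*((n:ℝ)+7))
  have p1 : HasDerivAt (fun t : ℝ => 2*t^2 + (4*(n:ℝ)+3)*t + (2*(n:ℝ)^2+(n:ℝ)+5))
      (2*(2*t) + (4*(n:ℝ)+3)) t := by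
    have := ((hasDerivAt_pow 2 t).const_mul (2:ℝ)).add
      (((hasDerivAt_id t).const_mul ((4*(n:ℝ)+3)))) |>.add_const ((2*(n:ℝ)^2+(n:ℝ)+5))
    exact this.congr_deriv (by norm_num)
  have := ((p3.mul h3).add (p2.mul h2)).sub (p1.mul h1)
  have heq : (fun t => ((3:ℝ)^n * t + (3:ℝ)^n/3*((n:ℝ)-9)) * Real.exp (3*t)
      + ((2:ℝ)^n*2*t + (2:ℝ)^n*((n:ℝ)+7)) * Real.exp (2*t)
      - (2*t^2 + (4*(n:ℝ)+3)*t + (2*(n:ℝ)^2+(n:ℝ)+5)) * Real.exp t) = gd n := by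
    funext s; simp [gd]
  rw [← heq]
  refine this.congr_deriv ?_
  simp only [gd]; push_cast; ring

lemma gd9_nonneg : ∀ t, 0 ≤ t → 0 ≤ gd 9 t := by
  intro t ht
  have hE := Real.add_one_le_exp t
  have hE0 := Real.exp_pos t
  have e2 : Real.exp (2*t) = Real.exp t * Real.exp t := by
    rw [two_mul, Real.exp_add]
  have e3 : Real.exp (3*t) = Real.exp t * Real.exp t * Real.exp t := by
    rw [show (3:ℝ)*t = t + t + t by ring, Real.exp_add, Real.exp_add]
  simp only [gd, e2, e3]
  push_cast
  nlinarith [mul_nonneg (mul_nonneg ht hE0.le) hE0.le, sq_nonneg (Real.exp t), sq_nonneg t,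
    mul_le_mul_of_nonneg_right hE hE0.le, mul_nonneg ht ht,
    mul_nonneg (mul_nonneg ht ht) hE0.le, mul_nonneg (mul_nonneg ht hE0.le) hE0.le]

lemma gd_chain (n : ℕ) (h0 : 0 ≤ gd n 0) (h : ∀ t, 0 ≤ t → 0 ≤ gd (n+1) t) :
    ∀ t, 0 ≤ t → 0 ≤ gd n t :=
  nonneg_of_deriv' (gd n) (gd (n+1)) (gd_deriv n) h0 h

lemma gd_nonneg (n : ℕ) (hn : 1 ≤ n) (hn' : n ≤ 9) : ∀ t, 0 ≤ t → 0 ≤ gd n t := by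
  have c8 : 0 ≤ gd 8 0 := by norm_num [gd]
  have c7 : 0 ≤ gd 7 0 := by norm_num [gd]
  have c6 : 0 ≤ gd 6 0 := by norm_num [gd]
  have c5 : 0 ≤ gd 5 0 := by norm_num [gd]
  have c4 : 0 ≤ gd 4 0 := by norm_num [gd]
  have c3 : 0 ≤ gd 3 0 := by norm_num [gd]
  have c2 : 0 ≤ gd 2 0 := by norm_num [gd]
  have c1 : 0 ≤ gd 1 0 := by norm_num [gd]
  have h9 := gd9_nonneg
  have h8 := gd_chain 8 c8 h9
  have h7 := gd_chain 7 c7 h8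
  have h6 := gd_chain 6 c6 h7
  have h5 := gd_chain 5 c5 h6
  have h4 := gd_chain 4 c4 h5
  have h3 := gd_chain 3 c3 h4
  have h2 := gd_chain 2 c2 h3
  have h1 := gd_chain 1 c1 h2
  interval_cases n <;> assumption

lemma G_nonneg : ∀ t, 0 ≤ t → 0 ≤ gd 0 t + 1 := by
  apply nonneg_of_deriv' _ (gd 1)
  · intro t; simpa using (gd_deriv 0 t).add_const 1
  · norm_num [gd]
  · exact gd_nonneg 1 le_rfl (by norm_num)

/-- `n`-th derivative of `H` (valid shape for `n ≥ 2`). -/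
noncomputable def hd (n : ℕ) (t : ℝ) : ℝ :=
  (3:ℝ)^n * Real.exp (3*t)
  - ((2:ℝ)^n*2*t^2 + (2:ℝ)^n*(2*(n:ℝ)-3)*t + (2:ℝ)^n/2*((n:ℝ)^2-4*(n:ℝ)+10)) * Real.exp (2*t)
  + (7-2*(n:ℝ)-2*t) * Real.exp t

lemma hd_deriv (n : ℕ) (t : ℝ) : HasDerivAt (hd n) (hd (n+1) t) t := by
  have h3 : HasDerivAt (fun t : ℝ => Real.exp (3*t)) (3 * Real.exp (3*t)) t := by
    simpa [mul_comm] using (((hasDerivAt_id t).const_mul (3:ℝ)).exp)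
  have h2 : HasDerivAt (fun t : ℝ => Real.exp (2*t)) (2 * Real.exp (2*t)) t := by
    simpa [mul_comm] using (((hasDerivAt_id t).const_mul (2:ℝ)).exp)
  have h1 : HasDerivAt (fun t : ℝ => Real.exp t) (Real.exp t) t := Real.hasDerivAt_exp t
  have p2 : HasDerivAt (fun t : ℝ => (2:ℝ)^n*2*t^2 + (2:ℝ)^n*(2*(n:ℝ)-3)*t
      + (2:ℝ)^n/2*((n:ℝ)^2-4*(n:ℝ)+10)) ((2:ℝ)^n*2*(2*t) + (2:ℝ)^n*(2*(n:ℝ)-3)) t := by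
    have := ((hasDerivAt_pow 2 t).const_mul ((2:ℝ)^n*2)).add
      ((hasDerivAt_id t).const_mul ((2:ℝ)^n*(2*(n:ℝ)-3))) |>.add_const ((2:ℝ)^n/2*((n:ℝ)^2-4*(n:ℝ)+10))
    exact this.congr_deriv (by norm_num)
  have p1 : HasDerivAt (fun t : ℝ => 7-2*(n:ℝ)-2*t) (-2 : ℝ) t := by
    simpa using (((hasDerivAt_id t).const_mul (2:ℝ)).const_sub (7-2*(n:ℝ)))
  have := (((hasDerivAt_const t ((3:ℝ)^n)).mul h3).sub (p2.mul h2)).add (p1.mul h1)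
  have heq : (fun t => (3:ℝ)^n * Real.exp (3*t)
      - ((2:ℝ)^n*2*t^2 + (2:ℝ)^n*(2*(n:ℝ)-3)*t + (2:ℝ)^n/2*((n:ℝ)^2-4*(n:ℝ)+10)) * Real.exp (2*t)
      + (7-2*(n:ℝ)-2*t) * Real.exp t) = hd n := by
    funext s; simp [hd]
  rw [← heq]
  refine this.congr_deriv ?_
  simp only [hd]; push_cast; ring

lemma exp_ge_quadratic (t : ℝ) (ht : 0 ≤ t) : 1 + t + t^2/4 ≤ Real.exp t := by
  have h := Real.add_one_le_exp (t/2)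
  have h2 : Real.exp t = Real.exp (t/2) * Real.exp (t/2) := by
    rw [← Real.exp_add]; ring_nf
  nlinarith [Real.exp_pos (t/2)]

lemma hd6_nonneg : ∀ t, 0 ≤ t → 0 ≤ hd 6 t := by
  intro t ht
  have hE := Real.add_one_le_exp t
  have hq := exp_ge_quadratic t ht
  have hE0 := Real.exp_pos t
  have e2 : Real.exp (2*t) = Real.exp t * Real.exp t := by
    rw [two_mul, Real.exp_add]
  have e3 : Real.exp (3*t) = Real.exp t * Real.exp t * Real.exp t := by
    rw [show (3:ℝ)*t = t + t + t by ring, Real.exp_add, Real.exp_add]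
  simp only [hd, e2, e3]
  push_cast
  nlinarith [mul_le_mul_of_nonneg_right hq (mul_nonneg hE0.le hE0.le),
    mul_le_mul_of_nonneg_right hE hE0.le, mul_nonneg ht hE0.le, sq_nonneg t,
    mul_nonneg (mul_nonneg ht ht) hE0.le, mul_nonneg (mul_nonneg ht hE0.le) hE0.le,
    mul_le_mul_of_nonneg_right hE (mul_nonneg hE0.le hE0.le), mul_nonneg ht ht]

lemma hd_chain (n : ℕ) (h0 : 0 ≤ hd n 0) (h : ∀ t, 0 ≤ t → 0 ≤ hd (n+1) t) :
    ∀ t, 0 ≤ t → 0 ≤ hd n t :=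
  nonneg_of_deriv' (hd n) (hd (n+1)) (hd_deriv n) h0 h

lemma hd2_nonneg : ∀ t, 0 ≤ t → 0 ≤ hd 2 t := by
  have c5 : 0 ≤ hd 5 0 := by norm_num [hd]
  have c4 : 0 ≤ hd 4 0 := by norm_num [hd]
  have c3 : 0 ≤ hd 3 0 := by norm_num [hd]
  have c2 : 0 ≤ hd 2 0 := by norm_num [hd]
  exact hd_chain 2 c2 (hd_chain 3 c3 (hd_chain 4 c4 (hd_chain 5 c5 hd6_nonneg)))

noncomputable def H1f (t : ℝ) : ℝ :=
  3*Real.exp (3*t) - (4*t^2-2*t+7)*Real.exp (2*t) + (5-2*t)*Real.exp t - 1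

noncomputable def H0f (t : ℝ) : ℝ :=
  Real.exp (3*t) - (2*t^2-3*t+5)*Real.exp (2*t) + (7-2*t)*Real.exp t - t - 3

lemma H1_nonneg : ∀ t, 0 ≤ t → 0 ≤ H1f t := by
  apply nonneg_of_deriv' _ (hd 2)
  · intro t
    have h3 : HasDerivAt (fun t : ℝ => Real.exp (3*t)) (3 * Real.exp (3*t)) t := by
      simpa [mul_comm] using (((hasDerivAt_id t).const_mul (3:ℝ)).exp)
    have h2 : HasDerivAt (fun t : ℝ => Real.exp (2*t)) (2 * Real.exp (2*t)) t := by
      simpa [mul_comm] using (((hasDerivAt_id t).const_mul (2:ℝ)).exp)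
    have h1 : HasDerivAt (fun t : ℝ => Real.exp t) (Real.exp t) t := Real.hasDerivAt_exp t
    have p2 : HasDerivAt (fun t : ℝ => 4*t^2-2*t+7) (4*(2*t)-2) t := by
      have := (((hasDerivAt_pow 2 t).const_mul (4:ℝ)).sub
        ((hasDerivAt_id t).const_mul (2:ℝ))).add_const (7:ℝ)
      exact this.congr_deriv (by norm_num)
    have p1 : HasDerivAt (fun t : ℝ => 5-2*t) (-2 : ℝ) t := by
      simpa using (((hasDerivAt_id t).const_mul (2:ℝ)).const_sub (5:ℝ))
    have := ((((hasDerivAt_const t (3:ℝ)).mul h3).sub (p2.mul h2)).add (p1.mul h1)).sub_const 1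
    have heq : (fun t : ℝ => 3*Real.exp (3*t) - (4*t^2-2*t+7)*Real.exp (2*t)
        + (5-2*t)*Real.exp t - 1) = H1f := by funext s; simp [H1f]
    rw [← heq]
    refine this.congr_deriv ?_
    simp only [hd]; push_cast; ring
  · norm_num [H1f]
  · exact hd2_nonneg

lemma H0_nonneg : ∀ t, 0 ≤ t → 0 ≤ H0f t := by
  apply nonneg_of_deriv' _ H1f
  · intro t
    have h3 : HasDerivAt (fun t : ℝ => Real.exp (3*t)) (3 * Real.exp (3*t)) t := by
      simpa [mul_comm] using (((hasDerivAt_id t).const_mul (3:ℝ)).exp)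
    have h2 : HasDerivAt (fun t : ℝ => Real.exp (2*t)) (2 * Real.exp (2*t)) t := by
      simpa [mul_comm] using (((hasDerivAt_id t).const_mul (2:ℝ)).exp)
    have h1 : HasDerivAt (fun t : ℝ => Real.exp t) (Real.exp t) t := Real.hasDerivAt_exp t
    have p2 : HasDerivAt (fun t : ℝ => 2*t^2-3*t+5) (2*(2*t)-3) t := by
      have := (((hasDerivAt_pow 2 t).const_mul (2:ℝ)).sub
        ((hasDerivAt_id t).const_mul (3:ℝ))).add_const (5:ℝ)
      exact this.congr_deriv (by norm_num)
    have p1 : HasDerivAt (fun t : ℝ => 7-2*t) (-2 : ℝ) t := by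
      simpa using (((hasDerivAt_id t).const_mul (2:ℝ)).const_sub (7:ℝ))
    have := (((((hasDerivAt_const t (1:ℝ)).mul h3).sub (p2.mul h2)).add (p1.mul h1)).sub
      (hasDerivAt_id t)).sub_const 3
    have heq : (fun t : ℝ => 1*Real.exp (3*t) - (2*t^2-3*t+5)*Real.exp (2*t)
        + (7-2*t)*Real.exp t - t - 3) = H0f := by funext s; simp [H0f]
    rw [← heq]
    refine this.congr_deriv ?_
    simp only [H1f]; push_cast; ring
  · norm_num [H0f]
  · exact H1_nonneg

lemma Ups_nonneg (r : ℝ) : 0 ≤ Ups r := by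
  have := Real.add_one_le_exp r; simp only [Ups]; linarith

lemma key_ineq (u : ℝ) :
    2 * (Ups u)^2 ≤ (Ups u + Ups (-u)) * (Real.exp u * Ups (-u)) := by
  rcases le_or_gt 0 u with hu | hu
  · have hG := G_nonneg u hu
    have hE0 := (Real.exp_pos u).ne'
    have e2 : Real.exp (2*u) = Real.exp u * Real.exp u := by rw [two_mul, Real.exp_add]
    have e3 : Real.exp (3*u) = Real.exp u * Real.exp u * Real.exp u := by
      rw [show (3:ℝ)*u = u + u + u by ring, Real.exp_add, Real.exp_add]
    have eneg : Real.exp (-u) = (Real.exp u)⁻¹ := Real.exp_neg u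
    have key : (Ups u + Ups (-u)) * (Real.exp u * Ups (-u)) - 2 * (Ups u)^2
        = (Real.exp u)⁻¹ * (gd 0 u + 1) := by
      simp only [Ups, gd, e2, e3, eneg]
      field_simp
      ring
    nlinarith [mul_nonneg (inv_nonneg.2 (Real.exp_pos u).le) hG]
  · obtain ⟨t, rfl⟩ : ∃ t, u = -t := ⟨-u, by ring⟩
    have htpos : 0 ≤ t := by linarith
    have hH := H0_nonneg t htpos
    have hE0 := (Real.exp_pos t).ne'
    have e2 : Real.exp (2*t) = Real.exp t * Real.exp t := by rw [two_mul, Real.exp_add]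
    have e3 : Real.exp (3*t) = Real.exp t * Real.exp t * Real.exp t := by
      rw [show (3:ℝ)*t = t + t + t by ring, Real.exp_add, Real.exp_add]
    have eneg : Real.exp (-t) = (Real.exp t)⁻¹ := Real.exp_neg t
    have key : (Ups (-t) + Ups (-(-t))) * (Real.exp (-t) * Ups (-(-t))) - 2 * (Ups (-t))^2
        = ((Real.exp t)⁻¹)^2 * H0f t := by
      simp only [Ups, H0f, e2, e3, eneg, neg_neg]
      field_simp
      ring
    nlinarith [mul_nonneg (pow_nonneg (inv_nonneg.2 (Real.exp_pos t).le) 2) hH]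

lemma ampoint (A B : ℝ) (hA : 0 ≤ A) (hB : 0 ≤ B) (u : ℝ) :
    Real.sqrt (8*A*B) * Ups u ≤ A * (Ups u + Ups (-u)) + B * (Real.exp u * Ups (-u)) := by
  have hU := Ups_nonneg u
  have hU' := Ups_nonneg (-u)
  have hE := (Real.exp_pos u).le
  have key := key_ineq u
  set P := A * (Ups u + Ups (-u)) with hP
  set Q := B * (Real.exp u * Ups (-u)) with hQ
  have hPn : 0 ≤ P := mul_nonneg hA (by linarith)
  have hQn : 0 ≤ Q := mul_nonneg hB (mul_nonneg hE hU')
  have h1 : Real.sqrt (8*A*B) * Ups u = Real.sqrt (8*A*B * (Ups u)^2) := by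
    rw [Real.sqrt_mul (show (0:ℝ) ≤ 8*A*B by positivity) ((Ups u)^2), Real.sqrt_sq hU]
  have h2 : 8*A*B * (Ups u)^2 ≤ (P + Q)^2 := by
    have hAB : 0 ≤ 4*(A*B) := by positivity
    have h3 : 8*A*B*(Ups u)^2 ≤ 4*(A*B)*((Ups u + Ups (-u)) * (Real.exp u * Ups (-u))) := by
      nlinarith [mul_le_mul_of_nonneg_left key hAB]
    have h4 : 4*(A*B)*((Ups u + Ups (-u)) * (Real.exp u * Ups (-u))) = 4*(P*Q) := by
      rw [hP, hQ]; ring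
    nlinarith [sq_nonneg (P - Q)]
  calc Real.sqrt (8*A*B) * Ups u = Real.sqrt (8*A*B * (Ups u)^2) := h1
    _ ≤ Real.sqrt ((P+Q)^2) := Real.sqrt_le_sqrt h2
    _ = P + Q := Real.sqrt_sq (by linarith)

lemma cdfun_aux (A δ : ℝ) (hA : 0 < A) (hδ : 1 ≤ δ) :
    IsCDFunction (fun r => A * r ^ (1+δ)) := by
  have hp : (0:ℝ) < 1 + δ := by linarith
  refine ⟨?_, ?_, ?_, ?_, 1, one_pos, ?_⟩
  · have : Continuous fun r : ℝ => A * r ^ (1+δ) := by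
      have h1 : Continuous fun r : ℝ => r ^ (1+δ) := continuous_iff_continuousAt.2 fun x =>
        Real.continuousAt_rpow_const x (1+δ) (Or.inr hp.le)
      exact continuous_const.mul h1
    exact this.continuousOn
  · simp [Real.zero_rpow hp.ne']
  · exact fun r hr => mul_nonneg hA.le (Real.rpow_nonneg hr _)
  · have key : ∀ r : ℝ, 0 < r → A * r ^ (1+δ) / r = A * r ^ δ := by
      intro r hr
      rw [Real.rpow_add hr, Real.rpow_one]
      field_simp
    intro a ha b hb hab
    simp only
    rw [key a ha, key b hb]
    exact mul_lt_mul_of_pos_left (Real.rpow_lt_rpow (le_of_lt ha) hab (by linarith)) hA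
  · have base : IntegrableOn (fun r : ℝ => r ^ (-(1+δ))) (Ioi 1) :=
      integrableOn_Ioi_rpow_of_lt (by linarith) one_pos
    have base2 : IntegrableOn (fun r : ℝ => A⁻¹ * r ^ (-(1+δ))) (Ioi 1) := base.const_mul _
    apply base2.congr_fun ?_ measurableSet_Ioi
    intro r hr
    have hr0 : (0:ℝ) < r := lt_trans one_pos hr
    simp only
    rw [Real.rpow_neg hr0.le]
    field_simp

lemma Ups_zero : Ups 0 = 0 := by simp [Ups]

lemma expid (v : ℝ) : (Real.exp v - 1) * v = Ups v + Real.exp v * Ups (-v) := by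
  simp only [Ups, Real.exp_neg]
  have h := (Real.exp_pos v).ne'
  field_simp
  ring

theorem main_ineq {X : Type*} [Fintype X] (hcard : 2 ≤ Fintype.card X)
    (l : X → ℝ) (hl : ∀ x, 0 < l x)
    (k : X → X → ℝ) (hkoff : ∀ x y : X, x ≠ y → k x y = l y)
    (lstar : ℝ) (hlstar : IsLeast (Set.range l) lstar)
    (δ c : ℝ) (hδ : 1 ≤ δ) (hc : 0 < c)
    (hups : ∀ r : ℝ, c * |r| ^ (1 + δ) ≤ Ups r + Ups (-r))
    (α : ℝ) (hα0 : 0 < α) (hα1 : α < lstar / 2) (f : X → ℝ) (x : X) :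
        Real.sqrt (2 * (∑ z, l z) * (lstar - 2 * α)) * psiUps k f x +
            (if 0 ≤ -genOp k f x then
              α * c / (∑ z, l z) ^ δ * (-genOp k f x) ^ (1 + δ) else 0)
          ≤ psi2Ups k f x := by
  classical
  have hX : Nonempty X := Fintype.card_pos_iff.1 (by omega)
  set S1 := ∑ z, l z with hS1def
  have hS1 : 0 < S1 := Finset.sum_pos (fun z _ => hl z) Finset.univ_nonempty
  have hlx : ∀ y : X, lstar ≤ l y := fun y => hlstar.2 ⟨y, rfl⟩
  have hlstar0 : 0 < lstar := by
    obtain ⟨x0, hx0⟩ := hlstar.1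
    rw [← hx0]; exact hl x0
  -- basic sums
  set P := ∑ y, l y * Ups (f y - f x) with hP
  set Pm := ∑ y, l y * Ups (-(f y - f x)) with hPm
  set T := ∑ y, l y * (Real.exp (f y - f x) * Ups (-(f y - f x))) with hT
  set Q : X → ℝ := fun y => ∑ z, l z * Ups (f z - f y) with hQ
  set D := ∑ y, l y * Q y with hD
  have hPnn : 0 ≤ P := Finset.sum_nonneg fun y _ => mul_nonneg (hl y).le (Ups_nonneg _)
  have hPmnn : 0 ≤ Pm := Finset.sum_nonneg fun y _ => mul_nonneg (hl y).le (Ups_nonneg _)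
  -- generator formulas
  have hgen : ∀ y, genOp k f y = ∑ z, l z * (f z - f y) := by
    intro y
    rw [genOp, tsum_fintype]
    apply Finset.sum_congr rfl
    intro z _
    rcases eq_or_ne z y with rfl | hzy
    · simp
    · rw [hkoff y z (Ne.symm hzy)]
  have hpsi : ∀ y, psiUps k f y = Q y := by
    intro y
    rw [psiUps, tsum_fintype]
    apply Finset.sum_congr rfl
    intro z _
    rcases eq_or_ne z y with rfl | hzy
    · simp [Ups_zero]
    · rw [hkoff y z (Ne.symm hzy)]
  have hpsix : psiUps k f x = P := hpsi x
  have hgendiff : ∀ y, genOp k f y - genOp k f x = -S1 * (f y - f x) := by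
    intro y
    rw [hgen y, hgen x, ← Finset.sum_sub_distrib]
    have : ∀ z : X, l z * (f z - f y) - l z * (f z - f x) = l z * (f x - f y) := by
      intro z; ring
    rw [Finset.sum_congr rfl fun z _ => this z, ← Finset.sum_mul]
    ring
  have hgenPsi : genOp k (psiUps k f) x = D - S1 * P := by
    rw [genOp, tsum_fintype]
    have h1 : ∀ y : X, k x y * (psiUps k f y - psiUps k f x)
        = l y * Q y - l y * P := by
      intro y
      rcases eq_or_ne y x with rfl | hyx
      · rw [sub_self, mul_zero, show Q y = P from rfl]; ring
      · rw [hkoff x y (Ne.symm hyx), hpsi, hpsix]; ring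
    rw [Finset.sum_congr rfl fun y _ => h1 y, Finset.sum_sub_distrib, ← Finset.sum_mul]
  have hbU : bUps k f (genOp k f) x = -S1 * (P + T) := by
    rw [bUps, tsum_fintype]
    have h1 : ∀ y : X, k x y * (Real.exp (f y - f x) - 1) * (genOp k f y - genOp k f x)
        = -S1 * (l y * Ups (f y - f x) + l y * (Real.exp (f y - f x) * Ups (-(f y - f x)))) := by
      intro y
      rcases eq_or_ne y x with rfl | hyx
      · simp [Ups_zero]
      · rw [hkoff x y (Ne.symm hyx), hgendiff y]
        have h := expid (f y - f x)
        linear_combination (-S1 * l y) * h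
    rw [Finset.sum_congr rfl fun y _ => h1 y, ← Finset.mul_sum, Finset.sum_add_distrib]
  have hpsi2 : psi2Ups k f x = (1/2) * D + (1/2) * (S1 * T) := by
    rw [psi2Ups, hgenPsi, hbU]; ring
  -- D lower bound
  have ups0 : Ups (-(f x - f x)) = 0 := by simp [Ups_zero]
  have hQlow : ∀ y, l x * Ups (-(f y - f x)) ≤ Q y := by
    intro y
    rw [neg_sub]
    exact Finset.single_le_sum (f := fun z => l z * Ups (f z - f y))
      (fun z _ => mul_nonneg (hl z).le (Ups_nonneg _)) (Finset.mem_univ x)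
  have hDlow : l x * (P + Pm) ≤ D := by
    have h5 : ∑ y, l y * (l x * Ups (-(f y - f x))) = l x * Pm := by
      rw [hPm, Finset.mul_sum]
      apply Finset.sum_congr rfl
      intro y _; ring
    have h6 : l x * P ≤ ∑ y, l y * (Q y - l x * Ups (-(f y - f x))) := by
      have h := Finset.single_le_sum
        (f := fun y => l y * (Q y - l x * Ups (-(f y - f x))))
        (fun y _ => mul_nonneg (hl y).le (sub_nonneg.2 (hQlow y))) (Finset.mem_univ x)
      refine le_trans (le_of_eq ?_) h
      show l x * P = l x * (Q x - l x * Ups (-(f x - f x)))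
      rw [ups0, show Q x = P from rfl]
      ring
    have h7 : ∑ y, l y * (Q y - l x * Ups (-(f y - f x)))
        = D - ∑ y, l y * (l x * Ups (-(f y - f x))) := by
      rw [hD, ← Finset.sum_sub_distrib]
      apply Finset.sum_congr rfl
      intro y _; ring
    rw [h7, h5] at h6
    linarith
  -- per-point AM-GM
  set κ := Real.sqrt (2 * S1 * (lstar - 2 * α)) with hκdef
  have hper : κ * P ≤ (lstar/2 - α) * (P + Pm) + (S1/2) * T := by
    have hA0 : (0:ℝ) ≤ lstar/2 - α := by linarith
    have hB0 : (0:ℝ) ≤ S1/2 := by linarith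
    have hκ : κ = Real.sqrt (8 * (lstar/2 - α) * (S1/2)) := by
      rw [hκdef]; congr 1; ring
    have hpt : ∀ y : X, κ * (l y * Ups (f y - f x)) ≤
        (lstar/2 - α) * (l y * Ups (f y - f x) + l y * Ups (-(f y - f x)))
        + (S1/2) * (l y * (Real.exp (f y - f x) * Ups (-(f y - f x)))) := by
      intro y
      have hp := ampoint (lstar/2 - α) (S1/2) hA0 hB0 (f y - f x)
      rw [← hκ] at hp
      have h2 := mul_le_mul_of_nonneg_left hp (hl y).le
      calc κ * (l y * Ups (f y - f x)) = l y * (κ * Ups (f y - f x)) := by ring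
        _ ≤ l y * ((lstar/2 - α) * (Ups (f y - f x) + Ups (-(f y - f x)))
            + (S1/2) * (Real.exp (f y - f x) * Ups (-(f y - f x)))) := h2
        _ = (lstar/2 - α) * (l y * Ups (f y - f x) + l y * Ups (-(f y - f x)))
            + (S1/2) * (l y * (Real.exp (f y - f x) * Ups (-(f y - f x)))) := by ring
    calc κ * P = ∑ y, κ * (l y * Ups (f y - f x)) := by rw [hP, Finset.mul_sum]
      _ ≤ ∑ y, ((lstar/2 - α) * (l y * Ups (f y - f x) + l y * Ups (-(f y - f x)))
          + (S1/2) * (l y * (Real.exp (f y - f x) * Ups (-(f y - f x))))) :=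
        Finset.sum_le_sum fun y _ => hpt y
      _ = (lstar/2 - α) * (P + Pm) + (S1/2) * T := by
        rw [Finset.sum_add_distrib, ← Finset.mul_sum, ← Finset.mul_sum, hP, hPm, hT,
          Finset.sum_add_distrib, mul_add]
  -- F bound
  have hFbound : (if 0 ≤ -genOp k f x then
      α * c / S1 ^ δ * (-genOp k f x) ^ (1 + δ) else 0) ≤ α * (P + Pm) := by
    split_ifs with hr
    · have hp1 : (0:ℝ) < 1 + δ := by linarith
      have hSδ : (0:ℝ) < S1 ^ δ := Real.rpow_pos_of_pos hS1 δ
      have h7 : -genOp k f x ≤ ∑ y, l y * |f y - f x| := by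
        rw [hgen x, ← Finset.sum_neg_distrib]
        apply Finset.sum_le_sum
        intro y _
        rw [show -(l y * (f y - f x)) = l y * (-(f y - f x)) by ring]
        exact mul_le_mul_of_nonneg_left (neg_le_abs _) (hl y).le
      set m := ∑ y, l y * |f y - f x| with hmdef
      have h8 : (-genOp k f x) ^ (1+δ) ≤ m ^ (1+δ) := Real.rpow_le_rpow hr h7 hp1.le
      have hw' : ∑ y : X, l y / S1 = 1 := by
        rw [← Finset.sum_div, ← hS1def]
        field_simp
      have hjen := Real.rpow_arith_mean_le_arith_mean_rpow Finset.univ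
        (fun y => l y / S1) (fun y => |f y - f x|)
        (fun i _ => div_nonneg (hl i).le hS1.le) hw'
        (fun i _ => abs_nonneg _) (show (1:ℝ) ≤ 1 + δ by linarith)
      have hm : m = S1 * ∑ y, (l y / S1) * |f y - f x| := by
        rw [Finset.mul_sum]
        apply Finset.sum_congr rfl
        intro y _
        field_simp
      have hsnn : (0:ℝ) ≤ ∑ y, (l y / S1) * |f y - f x| :=
        Finset.sum_nonneg fun y _ => mul_nonneg (div_nonneg (hl y).le hS1.le) (abs_nonneg _)
      have hmp : m ^ (1+δ) ≤ S1 ^ (1+δ) * ∑ y, (l y / S1) * |f y - f x| ^ (1+δ) := by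
        rw [hm, Real.mul_rpow hS1.le hsnn]
        exact mul_le_mul_of_nonneg_left hjen (Real.rpow_nonneg hS1.le _)
      have hS1p : S1 ^ (1+δ) = S1 * S1 ^ δ := by
        rw [Real.rpow_add hS1, Real.rpow_one]
      have hsum2 : S1 * ∑ y, (l y / S1) * |f y - f x| ^ (1+δ)
          = ∑ y, l y * |f y - f x| ^ (1+δ) := by
        rw [Finset.mul_sum]
        apply Finset.sum_congr rfl
        intro y _
        field_simp
      have h9 : (-genOp k f x) ^ (1+δ) ≤ S1 ^ δ * ∑ y, l y * |f y - f x| ^ (1+δ) := by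
        calc (-genOp k f x) ^ (1+δ) ≤ m ^ (1+δ) := h8
          _ ≤ S1 ^ (1+δ) * ∑ y, (l y / S1) * |f y - f x| ^ (1+δ) := hmp
          _ = S1 ^ δ * (S1 * ∑ y, (l y / S1) * |f y - f x| ^ (1+δ)) := by
              rw [hS1p]; ring
          _ = S1 ^ δ * ∑ y, l y * |f y - f x| ^ (1+δ) := by rw [hsum2]
      have hcoef : (0:ℝ) ≤ α * c / S1 ^ δ := by positivity
      have h10 := mul_le_mul_of_nonneg_left h9 hcoef
      have h11 : α * c / S1 ^ δ * (S1 ^ δ * ∑ y, l y * |f y - f x| ^ (1+δ))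
          = α * ∑ y, l y * (c * |f y - f x| ^ (1+δ)) := by
        rw [Finset.mul_sum, Finset.mul_sum, Finset.mul_sum]
        apply Finset.sum_congr rfl
        intro y _
        field_simp
      have h12 : ∑ y, l y * (c * |f y - f x| ^ (1+δ))
          ≤ ∑ y, l y * (Ups (f y - f x) + Ups (-(f y - f x))) :=
        Finset.sum_le_sum fun y _ => mul_le_mul_of_nonneg_left (hups _) (hl y).le
      have h13 : ∑ y, l y * (Ups (f y - f x) + Ups (-(f y - f x))) = P + Pm := by
        rw [hP, hPm, ← Finset.sum_add_distrib]
        apply Finset.sum_congr rfl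
        intro y _
        ring
      calc α * c / S1 ^ δ * (-genOp k f x) ^ (1+δ)
          ≤ α * ∑ y, l y * (c * |f y - f x| ^ (1+δ)) := by rw [← h11]; exact h10
        _ ≤ α * (P + Pm) := by
            rw [← h13]
            exact mul_le_mul_of_nonneg_left h12 hα0.le
    · exact mul_nonneg hα0.le (by linarith)
  -- assemble
  rw [hpsix, hpsi2]
  have hmono1 : lstar * (P + Pm) ≤ l x * (P + Pm) :=
    mul_le_mul_of_nonneg_right (hlx x) (by linarith)
  linarith [hFbound, hper, hDlow, hmono1]

/-- Example 2.8: on a finite state space with rates `k(x,y) = l(y)` (x ≠ y), the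
generator satisfies `CD_Υ(√(2|l|₁(l_* - 2α)), F)` with the power-type CD-function
`F(r) = (αc/|l|₁^δ) r^{1+δ}`, for every `α ∈ (0, l_*/2)`. -/
theorem stmt_12 {X : Type*} [Fintype X] (hcard : 2 ≤ Fintype.card X)
    (l : X → ℝ) (hl : ∀ x, 0 < l x)
    (k : X → X → ℝ) (hkoff : ∀ x y : X, x ≠ y → k x y = l y)
    (hkdiag : ∀ x : X, k x x = l x - ∑ z, l z)
    (lstar : ℝ) (hlstar : IsLeast (Set.range l) lstar)
    (δ c : ℝ) (hδ : 1 ≤ δ) (hc : 0 < c)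
    (hups : ∀ r : ℝ, c * |r| ^ (1 + δ) ≤ Ups r + Ups (-r))
    (α : ℝ) (hα0 : 0 < α) (hα1 : α < lstar / 2) :
    IsCDFunction (fun r => α * c / (∑ z, l z) ^ δ * r ^ (1 + δ))
    ∧ ∀ (f : X → ℝ) (x : X),
        Real.sqrt (2 * (∑ z, l z) * (lstar - 2 * α)) * psiUps k f x +
            trivExt (fun r => α * c / (∑ z, l z) ^ δ * r ^ (1 + δ)) (-genOp k f x)
          ≤ psi2Ups k f x := by
  classical
  have hX : Nonempty X := Fintype.card_pos_iff.1 (by omega)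
  have hS1 : 0 < ∑ z, l z := Finset.sum_pos (fun z _ => hl z) Finset.univ_nonempty
  constructor
  · exact cdfun_aux (α * c / (∑ z, l z) ^ δ) δ
      (div_pos (mul_pos hα0 hc) (Real.rpow_pos_of_pos hS1 δ)) hδ
  · intro f x
    exact main_ineq hcard l hl k hkoff lstar hlstar δ c hδ hc hups α hα0 hα1 f x
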